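/- Let λ > 0, c > 0 and let f₁, f₂, f₃, f₄ : ℝ × ℝ × ℝ → ℝ (arguments (x,y,t)) be four times continuously differentiable functions satisfying the first-order system ∂f₁/∂t = −c ∂f₁/∂x + λ(f₄ − f₁), ∂f₂/∂t = −c ∂f₂/∂y + λ(f₁ − f₂), ∂f₃/∂t = c ∂f₃/∂x + λ(f₂ − f₃), ∂f₄/∂t = c ∂f₄/∂y + λ(f₃ − f₄). Then p = f₁ + f₂ + f₃ + f₄ satisfies the fourth-order partial differential equation [(∂/∂t + λ)² − c² ∂²/∂x²] [(∂/∂t + λ)² − c² ∂²/∂y²] p − λ⁴ p = 0, where (∂/∂t + λ)² g means ∂²g/∂t² + 2λ ∂g/∂t + λ² g and the two bracketed operators are composed. -/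

import Mathlib

/-- Partial derivative with respect to the first coordinate `x`. -/
noncomputable def pdX (f : ℝ × ℝ × ℝ → ℝ) : ℝ × ℝ × ℝ → ℝ :=
  fun p => deriv (fun s => f (s, p.2.1, p.2.2)) p.1

/-- Partial derivative with respect to the second coordinate `y`. -/
noncomputable def pdY (f : ℝ × ℝ × ℝ → ℝ) : ℝ × ℝ × ℝ → ℝ :=
  fun p => deriv (fun s => f (p.1, s, p.2.2)) p.2.1

/-- Partial derivative with respect to the third coordinate `t` (time). -/
noncomputable def pdT (f : ℝ × ℝ × ℝ → ℝ) : ℝ × ℝ × ℝ → ℝ :=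
  fun p => deriv (fun s => f (p.1, p.2.1, s)) p.2.2

/-- The operator `(∂/∂t + λ)² − c² ∂²/∂x²`. -/
noncomputable def opX (lam c : ℝ) (g : ℝ × ℝ × ℝ → ℝ) : ℝ × ℝ × ℝ → ℝ :=
  fun p => pdT (pdT g) p + 2 * lam * pdT g p + lam ^ 2 * g p - c ^ 2 * pdX (pdX g) p

/-- The operator `(∂/∂t + λ)² − c² ∂²/∂y²`. -/
noncomputable def opY (lam c : ℝ) (g : ℝ × ℝ × ℝ → ℝ) : ℝ × ℝ × ℝ → ℝ :=
  fun p => pdT (pdT g) p + 2 * lam * pdT g p + lam ^ 2 * g p - c ^ 2 * pdY (pdY g) p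

namespace CyclicAux

abbrev V : Type := ℝ × ℝ × ℝ

/-- directional derivative -/
noncomputable def A (v : V) (f : V → ℝ) : V → ℝ := fun p => fderiv ℝ f p v

def e1 : V := ((1:ℝ), (0:ℝ), (0:ℝ))
def e2 : V := ((0:ℝ), (1:ℝ), (0:ℝ))
def e3 : V := ((0:ℝ), (0:ℝ), (1:ℝ))

lemma A_contDiff {m n : WithTop ℕ∞} (v : V) {f : V → ℝ} (hmn : m + 1 ≤ n)
    (hf : ContDiff ℝ n f) : ContDiff ℝ m (A v f) :=
  (ContinuousLinearMap.apply ℝ ℝ v).contDiff.comp (hf.fderiv_right hmn)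

lemma A_add (v : V) {g h : V → ℝ} {p : V} (hg : DifferentiableAt ℝ g p)
    (hh : DifferentiableAt ℝ h p) :
    A v (fun q => g q + h q) p = A v g p + A v h p := by
  simp only [A]
  exact congrArg (fun L : V →L[ℝ] ℝ => L v) (hg.hasFDerivAt.add hh.hasFDerivAt).fderiv

lemma A_const_mul (v : V) (a : ℝ) {g : V → ℝ} {p : V} (hg : DifferentiableAt ℝ g p) :
    A v (fun q => a * g q) p = a * A v g p := by
  simp [A, fderiv_const_mul hg a]

lemma A_comm {f : V → ℝ} (hf : ContDiff ℝ 2 f) (v w : V) (p : V) :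
    A v (A w f) p = A w (A v f) p := by
  have hd : DifferentiableAt ℝ (fderiv ℝ f) p := by
    have h1 : ContDiff ℝ 1 (fderiv ℝ f) := hf.fderiv_right (by norm_num)
    exact (h1.differentiable one_ne_zero) p
  have key : ∀ u : V, fderiv ℝ (fun q => fderiv ℝ f q u) p
      = (ContinuousLinearMap.apply ℝ ℝ u).comp (fderiv ℝ (fderiv ℝ f) p) := by
    intro u
    exact ((ContinuousLinearMap.apply ℝ ℝ u).hasFDerivAt.comp p hd.hasFDerivAt).fderiv
  have hsymm : IsSymmSndFDerivAt ℝ f p :=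
    (hf.contDiffAt).isSymmSndFDerivAt (by simp)
  show fderiv ℝ (fun q => fderiv ℝ f q w) p v = fderiv ℝ (fun q => fderiv ℝ f q v) p w
  rw [key w, key v]
  exact hsymm.eq v w

/-- first-order factor operator `∂_t + lam + cc ∂_v` -/
noncomputable def Bop (lam cc : ℝ) (v : V) (g : V → ℝ) : V → ℝ :=
  fun p => A e3 g p + lam * g p + cc * A v g p

lemma Bop_contDiff {m n : WithTop ℕ∞} {g : V → ℝ} (hmn : m + 1 ≤ n)
    (hg : ContDiff ℝ n g) (lam cc : ℝ) (v : V) : ContDiff ℝ m (Bop lam cc v g) := by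
  have h3 := A_contDiff e3 hmn hg
  have hv := A_contDiff v hmn hg
  have hg' : ContDiff ℝ m g := hg.of_le (le_trans le_self_add hmn)
  exact (h3.add (contDiff_const.mul hg')).add (contDiff_const.mul hv)

lemma A_Bop {g : V → ℝ} (hg : ContDiff ℝ 2 g) (lam cc : ℝ) (v u : V) (p : V) :
    A u (Bop lam cc v g) p = A u (A e3 g) p + lam * A u g p + cc * A u (A v g) p := by
  have hdg : DifferentiableAt ℝ g p := (hg.differentiable (by norm_num)) p
  have hd3 : DifferentiableAt ℝ (A e3 g) p :=
    ((A_contDiff e3 (m := 1) (by norm_num) hg).differentiable one_ne_zero) p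
  have hdv : DifferentiableAt ℝ (A v g) p :=
    ((A_contDiff v (m := 1) (by norm_num) hg).differentiable one_ne_zero) p
  have s1 : A u (Bop lam cc v g) p
      = A u (fun q => A e3 g q + lam * g q) p + A u (fun q => cc * A v g q) p :=
    A_add u (hd3.add (hdg.const_mul lam)) (hdv.const_mul cc)
  have s2 : A u (fun q => A e3 g q + lam * g q) p
      = A u (A e3 g) p + A u (fun q => lam * g q) p :=
    A_add u hd3 (hdg.const_mul lam)
  have s3 : A u (fun q => lam * g q) p = lam * A u g p := A_const_mul u lam hdg
  have s4 : A u (fun q => cc * A v g q) p = cc * A u (A v g) p := A_const_mul u cc hdv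
  rw [s1, s2, s3, s4]

lemma Bop_comm {g : V → ℝ} (hg : ContDiff ℝ 2 g) (lam a b : ℝ) (v w : V) :
    Bop lam a v (Bop lam b w g) = Bop lam b w (Bop lam a v g) := by
  funext p
  show A e3 (Bop lam b w g) p + lam * Bop lam b w g p + a * A v (Bop lam b w g) p
     = A e3 (Bop lam a v g) p + lam * Bop lam a v g p + b * A w (Bop lam a v g) p
  rw [A_Bop hg lam b w e3 p, A_Bop hg lam b w v p, A_Bop hg lam a v e3 p,
    A_Bop hg lam a v w p]
  simp only [Bop]
  rw [A_comm hg w e3 p, A_comm hg w v p, A_comm hg v e3 p]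
  ring

lemma Bop_mul {g : V → ℝ} (hg : ContDiff ℝ 1 g) (lam cc : ℝ) (v : V) (a : ℝ) :
    Bop lam cc v (fun q => a * g q) = fun p => a * Bop lam cc v g p := by
  funext p
  have hgp : DifferentiableAt ℝ g p := hg.differentiable one_ne_zero p
  show A e3 (fun q => a * g q) p + lam * (a * g p) + cc * A v (fun q => a * g q) p
      = a * (A e3 g p + lam * g p + cc * A v g p)
  rw [A_const_mul e3 a hgp, A_const_mul v a hgp]
  ring

lemma chain_step {g h : V → ℝ} (hg : ContDiff ℝ 1 g) (lam cc : ℝ) (v : V) (a : ℝ)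
    (hB : Bop lam cc v g = fun q => lam * h q) :
    Bop lam cc v (fun q => a * g q) = fun q => a * lam * h q := by
  funext p
  rw [congrFun (Bop_mul hg lam cc v a) p, congrFun hB p]
  show a * (lam * h p) = (fun q => a * lam * h q) p
  show a * (lam * h p) = a * lam * h p
  ring

lemma chain4 {g₁ g₂ g₃ g₄ : V → ℝ}
    (hg₂ : ContDiff ℝ 1 g₂) (hg₃ : ContDiff ℝ 1 g₃) (hg₄ : ContDiff ℝ 1 g₄)
    (lam : ℝ) (a₁ a₂ a₃ a₄ : ℝ) (v₁ v₂ v₃ v₄ : V)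
    (e₁ : Bop lam a₁ v₁ g₁ = fun q => lam * g₄ q)
    (e₄ : Bop lam a₄ v₄ g₄ = fun q => lam * g₃ q)
    (e₃ : Bop lam a₃ v₃ g₃ = fun q => lam * g₂ q)
    (e₂ : Bop lam a₂ v₂ g₂ = fun q => lam * g₁ q) :
    Bop lam a₂ v₂ (Bop lam a₃ v₃ (Bop lam a₄ v₄ (Bop lam a₁ v₁ g₁)))
      = fun q => lam ^ 4 * g₁ q := by
  rw [e₁, chain_step hg₄ lam a₄ v₄ lam e₄,
    chain_step hg₃ lam a₃ v₃ (lam * lam) e₃,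
    chain_step hg₂ lam a₂ v₂ (lam * lam * lam) e₂]
  funext q
  show lam * lam * lam * lam * g₁ q = lam ^ 4 * g₁ q
  ring

lemma A_add4 (v : V) {g1 g2 g3 g4 : V → ℝ} {p : V}
    (h1 : DifferentiableAt ℝ g1 p) (h2 : DifferentiableAt ℝ g2 p)
    (h3 : DifferentiableAt ℝ g3 p) (h4 : DifferentiableAt ℝ g4 p) :
    A v (fun q => g1 q + g2 q + g3 q + g4 q) p = A v g1 p + A v g2 p + A v g3 p + A v g4 p := by
  have s1 : A v (fun q => g1 q + g2 q + g3 q + g4 q) p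
      = A v (fun q => g1 q + g2 q + g3 q) p + A v g4 p :=
    A_add v ((h1.add h2).add h3) h4
  have s2 : A v (fun q => g1 q + g2 q + g3 q) p = A v (fun q => g1 q + g2 q) p + A v g3 p :=
    A_add v (h1.add h2) h3
  have s3 : A v (fun q => g1 q + g2 q) p = A v g1 p + A v g2 p := A_add v h1 h2
  rw [s1, s2, s3]

lemma Bop_add4 {g1 g2 g3 g4 : V → ℝ}
    (h1 : ContDiff ℝ 1 g1) (h2 : ContDiff ℝ 1 g2)
    (h3 : ContDiff ℝ 1 g3) (h4 : ContDiff ℝ 1 g4) (lam cc : ℝ) (v : V) :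
    Bop lam cc v (fun q => g1 q + g2 q + g3 q + g4 q)
      = fun p => Bop lam cc v g1 p + Bop lam cc v g2 p + Bop lam cc v g3 p + Bop lam cc v g4 p := by
  funext p
  have d1 := h1.differentiable one_ne_zero p
  have d2 := h2.differentiable one_ne_zero p
  have d3 := h3.differentiable one_ne_zero p
  have d4 := h4.differentiable one_ne_zero p
  show A e3 (fun q => g1 q + g2 q + g3 q + g4 q) p + lam * (g1 p + g2 p + g3 p + g4 p)
      + cc * A v (fun q => g1 q + g2 q + g3 q + g4 q) p = _
  rw [A_add4 e3 d1 d2 d3 d4, A_add4 v d1 d2 d3 d4]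
  show _ = (A e3 g1 p + lam * g1 p + cc * A v g1 p) + (A e3 g2 p + lam * g2 p + cc * A v g2 p)
      + (A e3 g3 p + lam * g3 p + cc * A v g3 p) + (A e3 g4 p + lam * g4 p + cc * A v g4 p)
  ring

lemma pdX_eq {f : V → ℝ} {p : V} (hf : DifferentiableAt ℝ f p) : pdX f p = A e1 f p := by
  have hcurve : HasDerivAt (fun s : ℝ => ((s, p.2.1, p.2.2) : V)) e1 p.1 := by
    exact (hasDerivAt_id p.1).prodMk (hasDerivAt_const p.1 (p.2.1, p.2.2))
  exact (hf.hasFDerivAt.comp_hasDerivAt p.1 hcurve).deriv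

lemma pdY_eq {f : V → ℝ} {p : V} (hf : DifferentiableAt ℝ f p) : pdY f p = A e2 f p := by
  have hcurve : HasDerivAt (fun s : ℝ => ((p.1, s, p.2.2) : V)) e2 p.2.1 := by
    simpa [e2] using (hasDerivAt_const p.2.1 p.1).prodMk
      ((hasDerivAt_id p.2.1).prodMk (hasDerivAt_const p.2.1 p.2.2))
  exact (hf.hasFDerivAt.comp_hasDerivAt p.2.1 hcurve).deriv

lemma pdT_eq {f : V → ℝ} {p : V} (hf : DifferentiableAt ℝ f p) : pdT f p = A e3 f p := by
  have hcurve : HasDerivAt (fun s : ℝ => ((p.1, p.2.1, s) : V)) e3 p.2.2 := by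
    simpa [e3] using (hasDerivAt_const p.2.2 p.1).prodMk
      ((hasDerivAt_const p.2.2 p.2.1).prodMk (hasDerivAt_id p.2.2))
  exact (hf.hasFDerivAt.comp_hasDerivAt p.2.2 hcurve).deriv

lemma pdT_fun {f : V → ℝ} (hf : Differentiable ℝ f) : pdT f = A e3 f :=
  funext fun p => pdT_eq (hf p)

lemma pdX_fun {f : V → ℝ} (hf : Differentiable ℝ f) : pdX f = A e1 f :=
  funext fun p => pdX_eq (hf p)

lemma pdY_fun {f : V → ℝ} (hf : Differentiable ℝ f) : pdY f = A e2 f :=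
  funext fun p => pdY_eq (hf p)

lemma opX_fun {g : V → ℝ} (hg : ContDiff ℝ 2 g) (lam c : ℝ) :
    opX lam c g = Bop lam c e1 (Bop lam (-c) e1 g) := by
  have hgd : Differentiable ℝ g := hg.differentiable (by norm_num)
  have hA3 : ContDiff ℝ 1 (A e3 g) := A_contDiff e3 (m := 1) (by norm_num) hg
  have hA1 : ContDiff ℝ 1 (A e1 g) := A_contDiff e1 (m := 1) (by norm_num) hg
  funext p
  show pdT (pdT g) p + 2 * lam * pdT g p + lam ^ 2 * g p - c ^ 2 * pdX (pdX g) p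
      = A e3 (Bop lam (-c) e1 g) p + lam * Bop lam (-c) e1 g p + c * A e1 (Bop lam (-c) e1 g) p
  rw [pdT_fun hgd, pdX_fun hgd, pdT_fun (hA3.differentiable one_ne_zero),
    pdX_fun (hA1.differentiable one_ne_zero),
    A_Bop hg lam (-c) e1 e3 p, A_Bop hg lam (-c) e1 e1 p]
  simp only [Bop]
  rw [A_comm hg e1 e3 p]
  ring

lemma opY_fun {g : V → ℝ} (hg : ContDiff ℝ 2 g) (lam c : ℝ) :
    opY lam c g = Bop lam c e2 (Bop lam (-c) e2 g) := by
  have hgd : Differentiable ℝ g := hg.differentiable (by norm_num)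
  have hA3 : ContDiff ℝ 1 (A e3 g) := A_contDiff e3 (m := 1) (by norm_num) hg
  have hA2 : ContDiff ℝ 1 (A e2 g) := A_contDiff e2 (m := 1) (by norm_num) hg
  funext p
  show pdT (pdT g) p + 2 * lam * pdT g p + lam ^ 2 * g p - c ^ 2 * pdY (pdY g) p
      = A e3 (Bop lam (-c) e2 g) p + lam * Bop lam (-c) e2 g p + c * A e2 (Bop lam (-c) e2 g) p
  rw [pdT_fun hgd, pdY_fun hgd, pdT_fun (hA3.differentiable one_ne_zero),
    pdY_fun (hA2.differentiable one_ne_zero),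
    A_Bop hg lam (-c) e2 e3 p, A_Bop hg lam (-c) e2 e2 p]
  simp only [Bop]
  rw [A_comm hg e2 e3 p]
  ring

end CyclicAux

open CyclicAux

theorem cyclic_planar_fourth_order_pde
    (lam c : ℝ) (hlam : 0 < lam) (hc : 0 < c)
    (f₁ f₂ f₃ f₄ : ℝ × ℝ × ℝ → ℝ)
    (hf₁ : ContDiff ℝ 4 f₁) (hf₂ : ContDiff ℝ 4 f₂)
    (hf₃ : ContDiff ℝ 4 f₃) (hf₄ : ContDiff ℝ 4 f₄)
    (h1 : ∀ p, pdT f₁ p = -c * pdX f₁ p + lam * (f₄ p - f₁ p))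
    (h2 : ∀ p, pdT f₂ p = -c * pdY f₂ p + lam * (f₁ p - f₂ p))
    (h3 : ∀ p, pdT f₃ p = c * pdX f₃ p + lam * (f₂ p - f₃ p))
    (h4 : ∀ p, pdT f₄ p = c * pdY f₄ p + lam * (f₃ p - f₄ p)) :
    ∀ p, opX lam c (opY lam c (fun q => f₁ q + f₂ q + f₃ q + f₄ q)) p
      - lam ^ 4 * (f₁ p + f₂ p + f₃ p + f₄ p) = 0 := by
  -- smoothness bookkeeping
  have c1_4 : ∀ {g : V → ℝ}, ContDiff ℝ 4 g → ContDiff ℝ 1 g := fun hg => hg.of_le (by norm_num)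
  have c2_4 : ∀ {g : V → ℝ}, ContDiff ℝ 4 g → ContDiff ℝ 2 g := fun hg => hg.of_le (by norm_num)
  -- the four first-order factor identities
  have ce1 : Bop lam c e1 f₁ = fun q => lam * f₄ q := by
    funext p
    have hd := (hf₁.differentiable (by norm_num)) p
    show A e3 f₁ p + lam * f₁ p + c * A e1 f₁ p = lam * f₄ p
    rw [← pdT_eq hd, ← pdX_eq hd, h1 p]; ring
  have ce2 : Bop lam c e2 f₂ = fun q => lam * f₁ q := by
    funext p
    have hd := (hf₂.differentiable (by norm_num)) p
    show A e3 f₂ p + lam * f₂ p + c * A e2 f₂ p = lam * f₁ p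
    rw [← pdT_eq hd, ← pdY_eq hd, h2 p]; ring
  have ce3 : Bop lam (-c) e1 f₃ = fun q => lam * f₂ q := by
    funext p
    have hd := (hf₃.differentiable (by norm_num)) p
    show A e3 f₃ p + lam * f₃ p + (-c) * A e1 f₃ p = lam * f₂ p
    rw [← pdT_eq hd, ← pdX_eq hd, h3 p]; ring
  have ce4 : Bop lam (-c) e2 f₄ = fun q => lam * f₃ q := by
    funext p
    have hd := (hf₄.differentiable (by norm_num)) p
    show A e3 f₄ p + lam * f₄ p + (-c) * A e2 f₄ p = lam * f₃ p
    rw [← pdT_eq hd, ← pdY_eq hd, h4 p]; ring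
  -- per-component fourth order identities
  have K₁ : Bop lam c e1 (Bop lam (-c) e1 (Bop lam c e2 (Bop lam (-c) e2 f₁)))
      = fun q => lam ^ 4 * f₁ q := by
    have hB4 : ContDiff ℝ 3 (Bop lam (-c) e2 f₁) := Bop_contDiff (by norm_num) hf₁ lam (-c) e2
    have hB24 : ContDiff ℝ 2 (Bop lam c e2 (Bop lam (-c) e2 f₁)) :=
      Bop_contDiff (by norm_num) hB4 lam c e2
    rw [Bop_comm hB24 lam c (-c) e1 e1]
    rw [Bop_comm (hB4.of_le (by norm_num)) lam c c e1 e2]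
    rw [Bop_comm (c2_4 hf₁) lam c (-c) e1 e2]
    have hB14 : ContDiff ℝ 2 (Bop lam (-c) e2 (Bop lam c e1 f₁)) :=
      Bop_contDiff (m := 2) (by norm_num) (Bop_contDiff (m := 3) (n := 4) (by norm_num) hf₁ lam c e1) lam (-c) e2
    rw [Bop_comm hB14 lam (-c) c e1 e2]
    exact chain4 (c1_4 hf₂) (c1_4 hf₃) (c1_4 hf₄) lam c c (-c) (-c) e1 e2 e1 e2 ce1 ce4 ce3 ce2
  have K₂ : Bop lam c e1 (Bop lam (-c) e1 (Bop lam c e2 (Bop lam (-c) e2 f₂)))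
      = fun q => lam ^ 4 * f₂ q := by
    rw [Bop_comm (c2_4 hf₂) lam c (-c) e2 e2]
    have hB2 : ContDiff ℝ 3 (Bop lam c e2 f₂) := Bop_contDiff (by norm_num) hf₂ lam c e2
    have hB42 : ContDiff ℝ 2 (Bop lam (-c) e2 (Bop lam c e2 f₂)) :=
      Bop_contDiff (by norm_num) hB2 lam (-c) e2
    rw [Bop_comm hB42 lam c (-c) e1 e1]
    rw [Bop_comm (hB2.of_le (by norm_num)) lam c (-c) e1 e2]
    exact chain4 (c1_4 hf₃) (c1_4 hf₄) (c1_4 hf₁) lam c (-c) (-c) c e2 e1 e2 e1 ce2 ce1 ce4 ce3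
  have K₃ : Bop lam c e1 (Bop lam (-c) e1 (Bop lam c e2 (Bop lam (-c) e2 f₃)))
      = fun q => lam ^ 4 * f₃ q := by
    -- [1,3,2,4] → [1,3,4,2] → [1,4,3,2] → [1,4,2,3] → [4,1,2,3]
    rw [Bop_comm (c2_4 hf₃) lam c (-c) e2 e2]
    have hB3i : ContDiff ℝ 3 (Bop lam c e2 f₃) := Bop_contDiff (by norm_num) hf₃ lam c e2
    rw [Bop_comm (hB3i.of_le (by norm_num)) lam (-c) (-c) e1 e2]
    rw [Bop_comm (c2_4 hf₃) lam (-c) c e1 e2]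
    have hB23 : ContDiff ℝ 2 (Bop lam c e2 (Bop lam (-c) e1 f₃)) :=
      Bop_contDiff (m := 2) (by norm_num) (Bop_contDiff (m := 3) (n := 4) (by norm_num) hf₃ lam (-c) e1) lam c e2
    rw [Bop_comm hB23 lam c (-c) e1 e2]
    exact chain4 (c1_4 hf₄) (c1_4 hf₁) (c1_4 hf₂) lam (-c) (-c) c c e1 e2 e1 e2 ce3 ce2 ce1 ce4
  have K₄ : Bop lam c e1 (Bop lam (-c) e1 (Bop lam c e2 (Bop lam (-c) e2 f₄)))
      = fun q => lam ^ 4 * f₄ q := by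
    rw [Bop_comm (Bop_contDiff (m := 2) (n := 4) (by norm_num) hf₄ lam (-c) e2 :
      ContDiff ℝ 2 (Bop lam (-c) e2 f₄)) lam (-c) c e1 e2]
    exact chain4 (c1_4 hf₁) (c1_4 hf₂) (c1_4 hf₃) lam (-c) c c (-c) e2 e1 e2 e1 ce4 ce3 ce2 ce1
  -- assemble
  intro p
  have hS4 : ContDiff ℝ 4 (fun q => f₁ q + f₂ q + f₃ q + f₄ q) := ((hf₁.add hf₂).add hf₃).add hf₄
  rw [opY_fun (c2_4 hS4) lam c]
  have hBB : ContDiff ℝ 2 (Bop lam c e2 (Bop lam (-c) e2 (fun q => f₁ q + f₂ q + f₃ q + f₄ q))) :=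
    Bop_contDiff (m := 2) (by norm_num) (Bop_contDiff (m := 3) (n := 4) (by norm_num) hS4 lam (-c) e2) lam c e2
  rw [opX_fun hBB lam c]
  rw [Bop_add4 (c1_4 hf₁) (c1_4 hf₂) (c1_4 hf₃) (c1_4 hf₄) lam (-c) e2]
  have hB₁ : ContDiff ℝ 3 (Bop lam (-c) e2 f₁) := Bop_contDiff (by norm_num) hf₁ lam (-c) e2
  have hB₂ : ContDiff ℝ 3 (Bop lam (-c) e2 f₂) := Bop_contDiff (by norm_num) hf₂ lam (-c) e2
  have hB₃ : ContDiff ℝ 3 (Bop lam (-c) e2 f₃) := Bop_contDiff (by norm_num) hf₃ lam (-c) e2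
  have hB₄ : ContDiff ℝ 3 (Bop lam (-c) e2 f₄) := Bop_contDiff (by norm_num) hf₄ lam (-c) e2
  rw [Bop_add4 (hB₁.of_le (by norm_num)) (hB₂.of_le (by norm_num)) (hB₃.of_le (by norm_num))
    (hB₄.of_le (by norm_num)) lam c e2]
  have hC₁ : ContDiff ℝ 2 (Bop lam c e2 (Bop lam (-c) e2 f₁)) :=
    Bop_contDiff (by norm_num) hB₁ lam c e2
  have hC₂ : ContDiff ℝ 2 (Bop lam c e2 (Bop lam (-c) e2 f₂)) :=
    Bop_contDiff (by norm_num) hB₂ lam c e2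
  have hC₃ : ContDiff ℝ 2 (Bop lam c e2 (Bop lam (-c) e2 f₃)) :=
    Bop_contDiff (by norm_num) hB₃ lam c e2
  have hC₄ : ContDiff ℝ 2 (Bop lam c e2 (Bop lam (-c) e2 f₄)) :=
    Bop_contDiff (by norm_num) hB₄ lam c e2
  rw [Bop_add4 (hC₁.of_le (by norm_num)) (hC₂.of_le (by norm_num)) (hC₃.of_le (by norm_num))
    (hC₄.of_le (by norm_num)) lam (-c) e1]
  rw [Bop_add4 (Bop_contDiff (n := 2) (by norm_num) hC₁ lam (-c) e1)
    (Bop_contDiff (n := 2) (by norm_num) hC₂ lam (-c) e1)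
    (Bop_contDiff (n := 2) (by norm_num) hC₃ lam (-c) e1)
    (Bop_contDiff (n := 2) (by norm_num) hC₄ lam (-c) e1) lam c e1]
  rw [K₁, K₂, K₃, K₄]
  show lam ^ 4 * f₁ p + lam ^ 4 * f₂ p + lam ^ 4 * f₃ p + lam ^ 4 * f₄ p
      - lam ^ 4 * (f₁ p + f₂ p + f₃ p + f₄ p) = 0
  ring
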